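/- Fix an integer n ≥ 1 and an integer ℓ with 0 ≤ ℓ ≤ n−1 and ℓ ≡ n−1 (mod 2). Then Σ over n₁+n₂ = n−1 (n₁,n₂ ≥ 0), 0 ≤ m₁ ≤ n₁, 0 ≤ m₂ ≤ n₂ with m₁+m₂ = ℓ, of C(n₁, m₁)·C(n₂, m₂)·(−1)^{n₁+m₁}, equals C(n, ℓ). -/

import Mathlib

open Polynomial Finset

private lemma sign_adj (k m : ℕ) : ((-1:ℤ))^(k-m) * (k.choose m) = (-1)^(k+m) * k.choose m := by
  rcases le_or_gt m k with h | h
  · have hk : k + m = (k - m) + 2*m := by omega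
    rw [hk, pow_add, pow_mul]
    simp
  · simp [Nat.choose_eq_zero_of_lt h]

/-- For integers `n ≥ 1` and `0 ≤ ℓ ≤ n−1` with `ℓ ≡ n−1 (mod 2)`, the sum over
`n₁ + n₂ = n−1` (`n₁, n₂ ≥ 0`) and `m₁ + m₂ = ℓ` of `C(n₁, m₁)·C(n₂, m₂)·(−1)^{n₁+m₁}`
equals `C(n, ℓ)` (the constraints `m₁ ≤ n₁`, `m₂ ≤ n₂` are enforced by the convention
`C(a,b) = 0` for `b > a`, built into `Nat.choose`). -/
theorem stmt9 (n ℓ : ℕ) (hn : 1 ≤ n) (hℓ : ℓ ≤ n - 1) (hpar : ℓ % 2 = (n - 1) % 2) :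
    ∑ n₁ ∈ Finset.range n, ∑ m₁ ∈ Finset.range (ℓ + 1),
        (-1 : ℤ) ^ (n₁ + m₁) * (n₁.choose m₁ : ℤ) * ((n - 1 - n₁).choose (ℓ - m₁) : ℤ) =
      (n.choose ℓ : ℤ) := by
  obtain ⟨N, rfl⟩ : ∃ N, n = N + 1 := ⟨n - 1, (Nat.succ_pred_eq_of_pos hn).symm⟩
  simp only [Nat.add_sub_cancel] at hℓ hpar ⊢
  -- geometric sum polynomial identity
  have key : (∑ k ∈ Finset.range (N+1), (X + C (-1:ℤ)) ^ k * (X + 1) ^ (N - k)) * (-2) =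
      (X + C (-1:ℤ)) ^ (N+1) - (X + 1) ^ (N+1) := by
    have h := geom_sum₂_mul (X + C (-1:ℤ)) (X + 1) (N+1)
    have h2 : (X + C (-1:ℤ)) - (X + 1) = -2 := by
      simp [sub_eq_iff_eq_add]; ring
    rw [h2] at h
    convert h using 3
    rw [Nat.add_sub_cancel]
  have hodd : Odd (N + 1 - ℓ) := Nat.odd_iff.2 (by omega)
  have hm2 : ((-2 : ℤ[X])) = C (-2) := by simp
  have hco : ∀ k, ((X + C (-1:ℤ)) ^ k * (X + 1) ^ (N - k)).coeff ℓ =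
      ∑ m ∈ Finset.range (ℓ + 1),
        (-1:ℤ)^(k + m) * (k.choose m) * ((N - k).choose (ℓ - m)) := by
    intro k
    rw [coeff_mul, Finset.Nat.sum_antidiagonal_eq_sum_range_succ_mk]
    refine Finset.sum_congr rfl fun m _ => ?_
    rw [coeff_X_add_C_pow, coeff_X_add_one_pow]
    have : (-1:ℤ)^(k - m) * (k.choose m) = (-1)^(k+m) * k.choose m := sign_adj k m
    rw [mul_comm ((-1:ℤ)^(k-m)) _] at this ⊢
    rw [this]
  have hr1 : ((X + C (-1:ℤ)) ^ (N+1)).coeff ℓ = -((N+1).choose ℓ : ℤ) := by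
    rw [coeff_X_add_C_pow, hodd.neg_one_pow]
    ring
  have hr2 : ((X + (1:ℤ[X])) ^ (N+1)).coeff ℓ = ((N+1).choose ℓ : ℤ) := by
    rw [coeff_X_add_one_pow]
  have hc := congrArg (fun p : ℤ[X] => p.coeff ℓ) key
  simp only [hm2, coeff_mul_C, finset_sum_coeff, hco, Polynomial.coeff_sub, hr1, hr2] at hc
  linarith
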